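/- For p ≥ 1 and −1 ≤ α, β ≤ 1, the minimum of tr(C_{z,p} Π) over all positive semidefinite Π ∈ M₄(ℂ) with trace 1, partial trace over the second factor equal to diag((1+β)/2,(1−β)/2), and partial trace over the first factor equal to diag((1+α)/2,(1−α)/2), equals 2^{p−1}|α−β|, where C_{z,p} = diag(0, 2^p, 2^p, 0). -/

import Mathlib

open Matrix
open scoped ComplexOrder

noncomputable section

/-- Partial trace over the second tensor factor of `M₄(ℂ) ≅ M₂(ℂ) ⊗ M₂(ℂ)`
(index ordering `(i,k) ↦ 2*i + k`). -/
def ptrace2 (A : Matrix (Fin 4) (Fin 4) ℂ) : Matrix (Fin 2) (Fin 2) ℂ :=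
  !![A 0 0 + A 1 1, A 0 2 + A 1 3; A 2 0 + A 3 1, A 2 2 + A 3 3]

/-- Partial trace over the first tensor factor. -/
def ptrace1 (A : Matrix (Fin 4) (Fin 4) ℂ) : Matrix (Fin 2) (Fin 2) ℂ :=
  !![A 0 0 + A 2 2, A 0 1 + A 2 3; A 1 0 + A 3 2, A 1 1 + A 3 3]

/-- Kronecker product `M₂(ℂ) × M₂(ℂ) → M₄(ℂ)` with index ordering `(i,k) ↦ 2*i + k`. -/
def kron (A B : Matrix (Fin 2) (Fin 2) ℂ) : Matrix (Fin 4) (Fin 4) ℂ :=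
  !![A 0 0 * B 0 0, A 0 0 * B 0 1, A 0 1 * B 0 0, A 0 1 * B 0 1;
     A 0 0 * B 1 0, A 0 0 * B 1 1, A 0 1 * B 1 0, A 0 1 * B 1 1;
     A 1 0 * B 0 0, A 1 0 * B 0 1, A 1 1 * B 0 0, A 1 1 * B 0 1;
     A 1 0 * B 1 0, A 1 0 * B 1 1, A 1 1 * B 1 0, A 1 1 * B 1 1]

def σx : Matrix (Fin 2) (Fin 2) ℂ := !![0, 1; 1, 0]
def σy : Matrix (Fin 2) (Fin 2) ℂ := !![0, -Complex.I; Complex.I, 0]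
def σz : Matrix (Fin 2) (Fin 2) ℂ := !![1, 0; 0, -1]

/-- The symmetric cost operator `C_{symm,p}`. -/
def Csymm (p : ℝ) : Matrix (Fin 4) (Fin 4) ℂ :=
  !![(((2:ℝ)^p : ℝ) : ℂ), 0, 0, -(((2:ℝ)^p : ℝ) : ℂ);
     0, (((2:ℝ)^(p+1) : ℝ) : ℂ), 0, 0;
     0, 0, (((2:ℝ)^(p+1) : ℝ) : ℂ), 0;
     -(((2:ℝ)^p : ℝ) : ℂ), 0, 0, (((2:ℝ)^p : ℝ) : ℂ)]

/-- The single-observable cost operator `C_{z,p} = diag(0, 2^p, 2^p, 0)`. -/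
def Cz (p : ℝ) : Matrix (Fin 4) (Fin 4) ℂ :=
  !![0, 0, 0, 0;
     0, (((2:ℝ)^p : ℝ) : ℂ), 0, 0;
     0, 0, (((2:ℝ)^p : ℝ) : ℂ), 0;
     0, 0, 0, 0]

/-- the optimal transport cost for `C_{z,p}` between the commuting states
`ρ(α) = diag((1+α)/2,(1−α)/2)` and `ρ(β)` equals `2^{p−1}|α−β|`. -/
theorem stmt_11 (p : ℝ) (hp : 1 ≤ p) (α β : ℝ) (hα₁ : -1 ≤ α) (hα₂ : α ≤ 1)
    (hβ₁ : -1 ≤ β) (hβ₂ : β ≤ 1) :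
    IsLeast {x : ℝ | ∃ P : Matrix (Fin 4) (Fin 4) ℂ, P.PosSemidef ∧ P.trace = 1 ∧
        ptrace2 P = !![(((1 + β)/2 : ℝ) : ℂ), 0; 0, (((1 - β)/2 : ℝ) : ℂ)] ∧
        ptrace1 P = !![(((1 + α)/2 : ℝ) : ℂ), 0; 0, (((1 - α)/2 : ℝ) : ℂ)] ∧
        (Cz p * P).trace = (x : ℂ)}
      ((2:ℝ)^(p-1) * |α - β|) := by
  have hp2 : (0:ℝ) < (2:ℝ)^p := Real.rpow_pos_of_pos two_pos p
  have hps : (2:ℝ)^(p-1) = (2:ℝ)^p / 2 := by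
    rw [Real.rpow_sub two_pos, Real.rpow_one]
  constructor
  · -- membership: explicit diagonal coupling
    rcases le_total α β with h | h
    · refine ⟨Matrix.diagonal (fun i =>
        ((![(1+α)/2, (β-α)/2, 0, (1-β)/2] i : ℝ) : ℂ)), ?_, ?_, ?_, ?_, ?_⟩
      · refine Matrix.PosSemidef.diagonal (fun i => Complex.zero_le_real.2 ?_)
        fin_cases i <;> simp <;> linarith
      · simp [Matrix.trace_diagonal, Fin.sum_univ_four]
        push_cast; ring
      · ext i j
        fin_cases i <;> fin_cases j <;>
          simp [ptrace2, Matrix.diagonal] <;> push_cast <;> ring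
      · ext i j
        fin_cases i <;> fin_cases j <;>
          simp [ptrace1, Matrix.diagonal] <;> push_cast <;> ring
      · simp [Cz, Matrix.trace, Matrix.diag, Matrix.mul_apply, Fin.sum_univ_four,
          Matrix.diagonal, Matrix.vecHead, Matrix.vecTail]
        rw [abs_of_nonpos (by linarith), hps]
        push_cast; ring
    · refine ⟨Matrix.diagonal (fun i =>
        ((![(1+β)/2, 0, (α-β)/2, (1-α)/2] i : ℝ) : ℂ)), ?_, ?_, ?_, ?_, ?_⟩
      · refine Matrix.PosSemidef.diagonal (fun i => Complex.zero_le_real.2 ?_)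
        fin_cases i <;> simp <;> linarith
      · simp [Matrix.trace_diagonal, Fin.sum_univ_four]
        push_cast; ring
      · ext i j
        fin_cases i <;> fin_cases j <;>
          simp [ptrace2, Matrix.diagonal] <;> push_cast <;> ring
      · ext i j
        fin_cases i <;> fin_cases j <;>
          simp [ptrace1, Matrix.diagonal] <;> push_cast <;> ring
      · simp [Cz, Matrix.trace, Matrix.diag, Matrix.mul_apply, Fin.sum_univ_four,
          Matrix.diagonal, Matrix.vecHead, Matrix.vecTail]
        rw [abs_of_nonneg (by linarith), hps]
        push_cast; ring
  · rintro x ⟨P, hP, htr, h2, h1, hc⟩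
    have hd : ∀ i, 0 ≤ P i i := fun i => by
      have := hP.diag_nonneg (i := i)
      simpa [Matrix.mulVec, dotProduct, Pi.single_apply] using this
    have ha : 0 ≤ (P 1 1).re := (Complex.nonneg_iff.1 (hd 1)).1
    have hb : 0 ≤ (P 2 2).re := (Complex.nonneg_iff.1 (hd 2)).1
    have e2 := congrFun (congrFun h2 0) 0
    have e1 := congrFun (congrFun h1 0) 0
    simp [ptrace2] at e2
    simp [ptrace1] at e1
    have e2r : (P 0 0).re + (P 1 1).re = (1 + β)/2 := by
      have := congrArg Complex.re e2; simpa using this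
    have e1r : (P 0 0).re + (P 2 2).re = (1 + α)/2 := by
      have := congrArg Complex.re e1; simpa using this
    have h11 : P 1 1 = ((P 1 1).re : ℂ) :=
      Complex.ext (by simp) (by simp [(Complex.nonneg_iff.1 (hd 1)).2])
    have h22 : P 2 2 = ((P 2 2).re : ℂ) :=
      Complex.ext (by simp) (by simp [(Complex.nonneg_iff.1 (hd 2)).2])
    have ecc : (((2:ℝ)^p * ((P 1 1).re + (P 2 2).re) : ℝ) : ℂ) = (x:ℂ) := by
      rw [← hc]
      simp only [Cz, Matrix.trace, Matrix.diag, Matrix.mul_apply, Fin.sum_univ_four]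
      rw [h11, h22]
      simp [Matrix.vecHead, Matrix.vecTail]
      push_cast
      ring
    have ecr : (2:ℝ)^p * ((P 1 1).re + (P 2 2).re) = x := by
      have := congrArg Complex.re ecc
      simpa using this
    rw [hps]
    rcases abs_cases (α - β) with ⟨habs, _⟩ | ⟨habs, _⟩ <;> rw [habs] <;> nlinarith
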